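/- arXiv:2302.14646 — 9 statements merged into one kernel-verified Lean document; each statement's English description precedes it below -/
import Mathlib

section
/- Let R be a commutative ring, m ≥ 1, and a₁,…,a_m ∈ R. Let f = 1 + ∑_{j=1}^m a_j X^j ∈ R⟦X⟧ and let Y_N denote the coefficient of X^N in f⁻¹. Then for every N ∈ ℕ, Y_N = ∑ (−1)^{n₁+n₂+⋯+n_m} · ∏_{d=2}^{m} C(n₁+n₂+⋯+n_d, n_d) · ∏_{v=1}^{m} a_v^{n_v}, where the sum ranges over all m-tuples (n₁,…,n_m) of nonnegative integers satisfying n₁ + 2n₂ + 3n₃ + ⋯ + m·n_m = N. -/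
open PowerSeries Finset

-- helper: multinomial over range as product of binomials
lemma natmult_range (M : ℕ) (g : ℕ → ℕ) :
    (Nat.multinomial (range M) g) = ∏ d ∈ range M, (∑ k ∈ range (d+1), g k).choose (g d) := by
  induction M with
  | zero => simp
  | succ M ih =>
    rw [Finset.prod_range_succ, ← ih, Finset.range_add_one,
      Nat.multinomial_insert Finset.notMem_range_self, ← Finset.range_add_one,
      Finset.sum_range_succ, Nat.add_comm (g M), Nat.mul_comm]

lemma multinomial_map {α β : Type*} (s : Finset α) (e : α ↪ β) (f : β → ℕ) :
    Nat.multinomial (s.map e) f = Nat.multinomial s (f ∘ e) := by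
  simp [Nat.multinomial, Finset.sum_map, Finset.prod_map]

lemma Icc_one_eq_map (m : ℕ) :
    Finset.Icc 1 m = (Finset.range m).map ⟨fun t => t + 1, add_left_injective 1⟩ := by
  ext j; simp only [Finset.mem_Icc, Finset.mem_map, Finset.mem_range, Function.Embedding.coeFn_mk]
  constructor
  · rintro ⟨h1, h2⟩; exact ⟨j - 1, by omega, by omega⟩
  · rintro ⟨t, ht, rfl⟩; omega

lemma prodIcc {M : Type*} [CommMonoid M] (m : ℕ) (g : ℕ → M) :
    ∏ j ∈ Finset.Icc 1 m, g j = ∏ i : Fin m, g (i.1 + 1) := by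
  rw [Icc_one_eq_map, Finset.prod_map]
  simp only [Function.Embedding.coeFn_mk]
  rw [← Fin.prod_univ_eq_prod_range (fun t => g (t + 1)) m]

lemma sumIcc {M : Type*} [AddCommMonoid M] (m : ℕ) (g : ℕ → M) :
    ∑ j ∈ Finset.Icc 1 m, g j = ∑ i : Fin m, g (i.1 + 1) := by
  rw [Icc_one_eq_map, Finset.sum_map]
  simp only [Function.Embedding.coeFn_mk]
  rw [← Fin.sum_univ_eq_sum_range (fun t => g (t + 1)) m]

lemma geom_coeff {R : Type*} [CommRing R] (g : R⟦X⟧) (hg : constantCoeff g = 0) (N : ℕ) :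
    coeff N (invOfUnit (1 + g) 1) = ∑ k ∈ range (N + 1), (-1 : R) ^ k * coeff N (g ^ k) := by
  have h1 : constantCoeff (1 + g) = ((1 : Rˣ) : R) := by simp [hg]
  have hmul := mul_invOfUnit (1 + g) 1 h1
  set u := invOfUnit (1 + g) 1 with hu
  set S := ∑ k ∈ range (N + 1), (-g) ^ k with hS
  have hgs : (1 + g) * S = 1 - (-g) ^ (N + 1) := by
    have h2 := geom_sum_mul (-g) (N + 1)
    rw [hS]; linear_combination -h2
  have key : u = S + (-g) ^ (N + 1) * u := by
    linear_combination S * hmul - u * hgs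
  have hdvd : (X : R⟦X⟧) ^ (N + 1) ∣ (-g) ^ (N + 1) * u :=
    Dvd.dvd.mul_right (pow_dvd_pow_of_dvd (X_dvd_iff.mpr (by simp [hg])) _) u
  have hz : coeff N ((-g) ^ (N + 1) * u) = 0 :=
    X_pow_dvd_iff.mp hdvd N (Nat.lt_succ_self N)
  rw [key, map_add, hz, add_zero, hS, map_sum]
  refine Finset.sum_congr rfl fun k _ => ?_
  have hc : ((-1 : R⟦X⟧)) ^ k = C ((-1 : R) ^ k) := by rw [map_pow, map_neg, map_one]
  rw [neg_pow, hc, coeff_C_mul]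

lemma coeff_gpow {R : Type*} [CommRing R] (m N k : ℕ) (a : ℕ → R) :
    coeff N ((∑ j ∈ Finset.Icc 1 m, C (a j) * X ^ j) ^ k) =
      ∑ c ∈ piAntidiag (Finset.Icc 1 m) k,
        if ∑ j ∈ Finset.Icc 1 m, j * c j = N then
          (Nat.multinomial (Finset.Icc 1 m) c : R) * ∏ j ∈ Finset.Icc 1 m, a j ^ c j
        else 0 := by
  rw [Finset.sum_pow_eq_sum_piAntidiag, map_sum]
  refine Finset.sum_congr rfl fun c hc => ?_
  have h1 : ∏ j ∈ Finset.Icc 1 m, (C (a j) * X ^ j) ^ c j =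
      C (∏ j ∈ Finset.Icc 1 m, a j ^ c j) * X ^ (∑ j ∈ Finset.Icc 1 m, j * c j) := by
    rw [map_prod, ← Finset.prod_pow_eq_pow_sum, ← Finset.prod_mul_distrib]
    exact Finset.prod_congr rfl fun j _ => by rw [mul_pow, ← map_pow, ← pow_mul]
  rw [h1, ← mul_assoc,
    show ((Nat.multinomial (Finset.Icc 1 m) c : R⟦X⟧)) = C (Nat.multinomial (Finset.Icc 1 m) c : R)
      from (map_natCast (C) _).symm,
    ← map_mul, coeff_C_mul, coeff_X_pow]
  by_cases h : ∑ j ∈ Finset.Icc 1 m, j * c j = N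
  · simp [h]
  · simp [h, Ne.symm h]

lemma map_valEmbedding_Iic {m : ℕ} (i : Fin m) :
    (Finset.Iic i).map Fin.valEmbedding = Finset.range (i.1 + 1) := by
  have him := i.isLt
  ext x
  simp only [Finset.mem_map, Finset.mem_Iic, Finset.mem_range, Fin.valEmbedding_apply]
  constructor
  · rintro ⟨k, hk, rfl⟩
    have := (Fin.le_def).mp hk; omega
  · intro hx
    exact ⟨⟨x, by omega⟩, by simp [Fin.le_def]; omega, rfl⟩

lemma sum_Iic_eq_range {m : ℕ} (i : Fin m) (f : ℕ → ℕ) :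
    ∑ k ∈ Finset.Iic i, f k.1 = ∑ t ∈ Finset.range (i.1 + 1), f t := by
  rw [← map_valEmbedding_Iic i, Finset.sum_map]
  rfl

def cfun (m : ℕ) (n : Fin m → ℕ) : ℕ → ℕ :=
  fun j => if h : 1 ≤ j ∧ j ≤ m then n ⟨j - 1, by omega⟩ else 0

lemma cfun_apply (m : ℕ) (n : Fin m → ℕ) (i : Fin m) : cfun m n (i.1 + 1) = n i := by
  rw [cfun, dif_pos ⟨by omega, i.isLt⟩]
  exact congrArg n (Fin.ext (by simp))

lemma cfun_support (m : ℕ) (n : Fin m → ℕ) (j : ℕ) (h : cfun m n j ≠ 0) : j ∈ Finset.Icc 1 m := by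
  rw [cfun] at h
  rw [Finset.mem_Icc]
  by_contra hc
  exact h (dif_neg (by omega))

lemma mult_eq_chooseprod (m : ℕ) (c : ℕ → ℕ) :
    (Nat.multinomial (Finset.Icc 1 m) c) =
      ∏ i : Fin m, (∑ k ∈ Finset.Iic i, c (k.1 + 1)).choose (c (i.1 + 1)) := by
  rw [Icc_one_eq_map, multinomial_map]
  have : (c ∘ (⟨fun t => t + 1, add_left_injective 1⟩ : ℕ ↪ ℕ)) = fun t => c (t + 1) := rfl
  rw [this, natmult_range,
    ← Fin.prod_univ_eq_prod_range (fun d => (∑ k ∈ Finset.range (d + 1), c (k + 1)).choose (c (d + 1))) m]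
  exact Finset.prod_congr rfl fun i _ => by rw [sum_Iic_eq_range i (fun k => c (k + 1))]

lemma filterprod {R : Type*} [CommRing R] (m : ℕ) (n : Fin m → ℕ) :
    ∏ i ∈ Finset.univ.filter (fun i : Fin m => 1 ≤ i.1),
        ((∑ k ∈ Finset.Iic i, n k).choose (n i) : R) =
      ∏ i : Fin m, ((∑ k ∈ Finset.Iic i, n k).choose (n i) : R) := by
  apply Finset.prod_subset (Finset.filter_subset _ _)
  intro i _ hni
  have hi0 : i.1 = 0 := by
    rcases Nat.eq_zero_or_pos i.1 with h | h
    · exact h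
    · exact absurd (Finset.mem_filter.mpr ⟨Finset.mem_univ i, h⟩) hni
  have hIic : Finset.Iic i = {i} := by
    ext k
    simp only [Finset.mem_Iic, Finset.mem_singleton, Fin.le_def, hi0, Fin.ext_iff]
    omega
  rw [hIic, Finset.sum_singleton, Nat.choose_self, Nat.cast_one]


theorem stmt_1 (R : Type*) [CommRing R] (m : ℕ) (hm : 1 ≤ m) (a : ℕ → R) (N : ℕ) :
    coeff N (invOfUnit (1 + ∑ j ∈ Finset.Icc 1 m, C (a j) * X ^ j) 1) =
      ∑ n ∈ Finset.filter (fun n : Fin m → ℕ => ∑ i, (i.1 + 1) * n i = N)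
          (Fintype.piFinset fun _ => Finset.range (N + 1)),
        (-1 : R) ^ (∑ i, n i) *
          (∏ i ∈ Finset.univ.filter (fun i : Fin m => 1 ≤ i.1),
            ((∑ k ∈ Finset.Iic i, n k).choose (n i) : R)) *
          ∏ i : Fin m, a (i.1 + 1) ^ n i := by
  classical
  have hg0 : constantCoeff (∑ j ∈ Finset.Icc 1 m, C (a j) * X ^ j) = 0 := by
    rw [map_sum]
    refine Finset.sum_eq_zero fun j hj => ?_
    rw [Finset.mem_Icc] at hj
    rw [map_mul, map_pow, constantCoeff_X, constantCoeff_C, zero_pow (by omega : j ≠ 0), mul_zero]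
  rw [geom_coeff _ hg0 N]
  simp only [coeff_gpow, Finset.mul_sum, mul_ite, mul_zero]
  rw [Finset.sum_sigma', ← Finset.sum_filter]
  refine Finset.sum_nbij' (i := fun p => fun i : Fin m => p.2 (i.1 + 1))
    (j := fun n => ⟨∑ i, n i, cfun m n⟩) ?_ ?_ ?_ ?_ ?_
  · rintro ⟨k, c⟩ hp
    rw [Finset.mem_filter, Finset.mem_sigma, Finset.mem_range, mem_piAntidiag] at hp
    obtain ⟨⟨hkN, hsum, hsupp⟩, hcond⟩ := hp
    rw [Finset.mem_filter]
    constructor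
    · rw [Fintype.mem_piFinset]
      intro i
      rw [Finset.mem_range, Nat.lt_succ_iff]
      calc c (i.1 + 1) ≤ (i.1 + 1) * c (i.1 + 1) := Nat.le_mul_of_pos_left _ (by omega)
        _ ≤ ∑ j ∈ Finset.Icc 1 m, j * c j :=
            Finset.single_le_sum (f := fun j => j * c j) (fun _ _ => Nat.zero_le _)
              (Finset.mem_Icc.mpr ⟨by omega, i.isLt⟩)
        _ = N := hcond
    · rw [← sumIcc m (fun j => j * c j)]
      exact hcond
  · intro n hn
    rw [Finset.mem_filter, Fintype.mem_piFinset] at hn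
    obtain ⟨hmem, hcond⟩ := hn
    rw [Finset.mem_filter, Finset.mem_sigma, Finset.mem_range, mem_piAntidiag]
    refine ⟨⟨Nat.lt_succ_of_le ?_, ?_, cfun_support m n⟩, ?_⟩
    · calc ∑ i, n i ≤ ∑ i : Fin m, (i.1 + 1) * n i :=
            Finset.sum_le_sum fun i _ => Nat.le_mul_of_pos_left _ (by omega)
        _ = N := hcond
    · rw [sumIcc m (cfun m n)]
      exact Finset.sum_congr rfl fun i _ => cfun_apply m n i
    · rw [sumIcc m (fun j => j * cfun m n j)]
      rw [← hcond]
      exact Finset.sum_congr rfl fun i _ => by rw [cfun_apply m n i]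
  · rintro ⟨k, c⟩ hp
    rw [Finset.mem_filter, Finset.mem_sigma, Finset.mem_range, mem_piAntidiag] at hp
    obtain ⟨⟨hkN, hsum, hsupp⟩, hcond⟩ := hp
    have h1 : ∑ i : Fin m, c (i.1 + 1) = k := by rw [← sumIcc m c]; exact hsum
    have h2 : cfun m (fun i : Fin m => c (i.1 + 1)) = c := by
      funext j
      rw [cfun]
      by_cases h : 1 ≤ j ∧ j ≤ m
      · rw [dif_pos h]
        have : j - 1 + 1 = j := by omega
        simp only [this]
      · rw [dif_neg h]
        by_contra hc
        exact h (Finset.mem_Icc.mp (hsupp j (Ne.symm hc)))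
    rw [Sigma.mk.inj_iff]
    exact ⟨h1, heq_of_eq h2⟩
  · intro n hn
    funext i
    exact cfun_apply m n i
  · rintro ⟨k, c⟩ hp
    rw [Finset.mem_filter, Finset.mem_sigma, Finset.mem_range, mem_piAntidiag] at hp
    obtain ⟨⟨hkN, hsum, hsupp⟩, hcond⟩ := hp
    have h1 : ∑ i : Fin m, c (i.1 + 1) = k := by rw [← sumIcc m c]; exact hsum
    have h2 : ((Nat.multinomial (Finset.Icc 1 m) c : R)) =
        ∏ i ∈ Finset.univ.filter (fun i : Fin m => 1 ≤ i.1),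
          ((∑ k ∈ Finset.Iic i, c (k.1 + 1)).choose (c (i.1 + 1)) : R) := by
      rw [filterprod m (fun i : Fin m => c (i.1 + 1)), mult_eq_chooseprod m c, Nat.cast_prod]
    have h3 : ∏ j ∈ Finset.Icc 1 m, a j ^ c j = ∏ i : Fin m, a (i.1 + 1) ^ c (i.1 + 1) :=
      prodIcc m (fun j => a j ^ c j)
    rw [h2, h3, ← h1, mul_assoc]
end

section
/- Let R be a commutative ring and x ∈ R. Let f = 1 + (−x²−4x−1)X + x²X² ∈ R⟦X⟧ and let Y_n denote the coefficient of X^n in f⁻¹ (so the Y_n are the sextet polynomials of hexagonal systems). Then for every n ∈ ℕ, Y_n = ∑_{k=0}^{⌊n/2⌋} (−1)^{2n−3k} · C(n−k, k) · (x²+4x+1)^{n−2k} · x^{2k}. -/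
open PowerSeries Finset

private def Fib2 {R : Type*} [CommRing R] (s t : R) (n : ℕ) : R :=
  ∑ k ∈ Finset.range (n + 1), (-1 : R) ^ k * ((n - k).choose k : R) * s ^ (n - 2 * k) * t ^ k

private lemma Fib2_zero {R : Type*} [CommRing R] (s t : R) : Fib2 s t 0 = 1 := by
  simp [Fib2]

private lemma Fib2_one {R : Type*} [CommRing R] (s t : R) : Fib2 s t 1 = s := by
  simp [Fib2, Finset.sum_range_succ]

private lemma Fib2_rec {R : Type*} [CommRing R] (s t : R) (n : ℕ) :
    Fib2 s t (n + 2) = s * Fib2 s t (n + 1) - t * Fib2 s t n := by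
  unfold Fib2
  have hpadb : ∑ k ∈ Finset.range (n + 2), (-1 : R) ^ k * ((n + 1 - k).choose k : R)
        * s ^ (n + 1 - 2 * k) * t ^ k
      = ∑ k ∈ Finset.range (n + 3), (-1 : R) ^ k * ((n + 1 - k).choose k : R)
        * s ^ (n + 1 - 2 * k) * t ^ k := by
    apply Finset.sum_subset
    · intro k hk; simp only [Finset.mem_range] at *; omega
    · intro k hk1 hk2
      simp only [Finset.mem_range] at hk1 hk2
      rw [Nat.choose_eq_zero_of_lt (by omega)]
      push_cast; ring
  have hpadc : ∑ k ∈ Finset.range (n + 1), (-1 : R) ^ k * ((n - k).choose k : R)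
        * s ^ (n - 2 * k) * t ^ k
      = ∑ k ∈ Finset.range (n + 2), (-1 : R) ^ k * ((n - k).choose k : R)
        * s ^ (n - 2 * k) * t ^ k := by
    apply Finset.sum_subset
    · intro k hk; simp only [Finset.mem_range] at *; omega
    · intro k hk1 hk2
      simp only [Finset.mem_range] at hk1 hk2
      rw [Nat.choose_eq_zero_of_lt (by omega)]
      push_cast; ring
  rw [hpadb, hpadc, Finset.mul_sum, Finset.mul_sum]
  rw [Finset.sum_range_succ' (fun k => (-1 : R) ^ k * ((n + 2 - k).choose k : R)
        * s ^ (n + 2 - 2 * k) * t ^ k) (n + 2),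
      Finset.sum_range_succ' (fun k => s * ((-1 : R) ^ k * ((n + 1 - k).choose k : R)
        * s ^ (n + 1 - 2 * k) * t ^ k)) (n + 2)]
  rw [add_sub_right_comm, ← Finset.sum_sub_distrib]
  congr 1
  · apply Finset.sum_congr rfl
    intro k hk
    simp only [Finset.mem_range] at hk
    rcases le_or_gt (2 * k + 1) n with h | h
    · -- Pascal case
      have hch : ((n + 2 - (k + 1)).choose (k + 1)) =
          (n - k).choose k + (n - k).choose (k + 1) := by
        have h1 : n + 2 - (k + 1) = (n - k) + 1 := by omega
        rw [h1, Nat.choose_succ_succ]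
      have he1 : n + 2 - 2 * (k + 1) = n - 2 * k := by omega
      have he2 : s * s ^ (n + 1 - 2 * (k + 1)) = s ^ (n - 2 * k) := by
        have : n - 2 * k = (n + 1 - 2 * (k + 1)) + 1 := by omega
        rw [this, pow_succ]; ring
      have hc1 : n + 1 - (k + 1) = n - k := by omega
      simp only [hch, he1, hc1, ← he2]
      push_cast
      ring
    · -- degenerate case : 2k ≥ n
      have hc1 : ((n + 1 - (k + 1)).choose (k + 1) : R) = 0 := by
        rw [Nat.choose_eq_zero_of_lt (by omega)]; norm_cast
      have hc2 : ((n + 2 - (k + 1)).choose (k + 1)) = (n - k).choose k := by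
        rcases Nat.lt_or_ge n (2 * k) with h2 | h2
        · rw [Nat.choose_eq_zero_of_lt (by omega), Nat.choose_eq_zero_of_lt (by omega)]
        · have hn : n = 2 * k := by omega
          subst hn
          have e1 : 2 * k + 2 - (k + 1) = k + 1 := by omega
          have e2 : 2 * k - k = k := by omega
          rw [e1, e2, Nat.choose_self, Nat.choose_self]
      have he1 : n + 2 - 2 * (k + 1) = n - 2 * k := by omega
      simp only [hc2, he1, hc1]
      push_cast
      ring
  · simp [pow_succ, mul_comm]

theorem stmt_2 (R : Type*) [CommRing R] (x : R) (n : ℕ) :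
    coeff (R := R) n (invOfUnit (1 + C (R := R) (-x ^ 2 - 4 * x - 1) * X + C (R := R) (x ^ 2) * X ^ 2) 1) =
      ∑ k ∈ Finset.range (n / 2 + 1),
        (-1 : R) ^ (2 * n - 3 * k) * ((n - k).choose k : R) *
          (x ^ 2 + 4 * x + 1) ^ (n - 2 * k) * x ^ (2 * k) := by
  set s : R := x ^ 2 + 4 * x + 1 with hs
  set f : R⟦X⟧ := 1 + C (R := R) (-x ^ 2 - 4 * x - 1) * X + C (R := R) (x ^ 2) * X ^ 2 with hf
  set g : R⟦X⟧ := invOfUnit f 1 with hg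
  have hconst : constantCoeff (R := R) f = 1 := by
    rw [hf]
    simp
  have hmul : f * g = 1 := mul_invOfUnit f 1 (by simpa using hconst)
  have hcg : constantCoeff (R := R) g = 1 := by
    rw [hg, constantCoeff_invOfUnit]; simp
  -- coefficients recurrence
  have hrec : ∀ m : ℕ, coeff (R := R) (m + 2) g =
      s * coeff (R := R) (m + 1) g - x ^ 2 * coeff (R := R) m g := by
    intro m
    have h1 : coeff (R := R) (m + 2) (f * g) = 0 := by
      rw [hmul]; simp [coeff_one]
    rw [hf] at h1
    rw [add_mul, add_mul, one_mul, map_add, map_add] at h1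
    rw [mul_assoc, coeff_C_mul, coeff_succ_X_mul] at h1
    rw [mul_assoc, coeff_C_mul] at h1
    rw [show (coeff (R := R) (m + 2)) (X ^ 2 * g) = coeff (R := R) m g by
      simpa using coeff_X_pow_mul g 2 m] at h1
    rw [hs]
    linear_combination h1
  have h0 : coeff (R := R) 0 g = 1 := by
    rw [hg, coeff_zero_eq_constantCoeff, constantCoeff_invOfUnit]; simp
  have h1 : coeff (R := R) 1 g = s := by
    have hc : coeff (R := R) 1 (f * g) = 0 := by rw [hmul]; simp [coeff_one]
    rw [hf, add_mul, add_mul, one_mul, map_add, map_add] at hc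
    rw [mul_assoc, coeff_C_mul, coeff_succ_X_mul] at hc
    rw [mul_assoc, coeff_C_mul, coeff_X_pow_mul' g 2 1] at hc
    simp only [show ¬ (2 ≤ 1) by omega, if_false, mul_zero, add_zero] at hc
    rw [coeff_zero_eq_constantCoeff, hcg] at hc
    rw [hs]
    linear_combination hc
  have key : ∀ m : ℕ, coeff (R := R) m g = Fib2 s (x ^ 2) m := by
    intro m
    induction m using Nat.strong_induction_on with
    | _ m ih =>
      match m with
      | 0 => rw [h0, Fib2_zero]
      | 1 => rw [h1, Fib2_one]
      | (m + 2) =>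
        rw [hrec m, ih (m + 1) (by omega), ih m (by omega), Fib2_rec]
  rw [key n]
  -- now identify Fib2 with the stated sum
  unfold Fib2
  rw [show (∑ k ∈ Finset.range (n / 2 + 1),
        (-1 : R) ^ (2 * n - 3 * k) * ((n - k).choose k : R) * s ^ (n - 2 * k) * x ^ (2 * k))
      = ∑ k ∈ Finset.range (n + 1),
        (-1 : R) ^ (2 * n - 3 * k) * ((n - k).choose k : R) * s ^ (n - 2 * k) * x ^ (2 * k) from
    Finset.sum_subset (by
        intro k hk; simp only [Finset.mem_range] at *; omega)
      (by
        intro k hk1 hk2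
        simp only [Finset.mem_range] at hk1 hk2
        rw [Nat.choose_eq_zero_of_lt (by omega)]
        push_cast; ring)]
  apply Finset.sum_congr rfl
  intro k hk
  simp only [Finset.mem_range] at hk
  rcases le_or_gt (2 * k) n with h | h
  · have hsign : (-1 : R) ^ (2 * n - 3 * k) = (-1 : R) ^ k := by
      have h3 : 3 * k ≤ 2 * n := by omega
      have hsum : (2 * n - 3 * k) + 3 * k = 2 * n := by omega
      have hmul2 : (-1 : R) ^ (2 * n - 3 * k) * (-1 : R) ^ (3 * k) = (-1 : R) ^ (2 * n) := by
        rw [← pow_add, hsum]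
      have h2n : (-1 : R) ^ (2 * n) = 1 := by
        rw [pow_mul]; simp
      have h3k : (-1 : R) ^ (3 * k) = (-1 : R) ^ k := by
        rw [show 3 * k = 2 * k + k by ring, pow_add, pow_mul]; simp
      have h3k2 : (-1 : R) ^ (3 * k) * (-1 : R) ^ (3 * k) = 1 := by
        rw [← pow_add, show 3 * k + 3 * k = 2 * (3 * k) by ring, pow_mul]; simp
      calc (-1 : R) ^ (2 * n - 3 * k)
          = (-1 : R) ^ (2 * n - 3 * k) * ((-1) ^ (3 * k) * (-1) ^ (3 * k)) := by
            rw [h3k2, mul_one]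
        _ = ((-1 : R) ^ (2 * n)) * (-1) ^ (3 * k) := by rw [← mul_assoc, hmul2]
        _ = (-1 : R) ^ k := by rw [h2n, h3k, one_mul]
    rw [hsign, pow_mul]
  · rw [Nat.choose_eq_zero_of_lt (by omega)]
    push_cast; ring
end

section
/- Let F_j and L_j denote the Fibonacci and Lucas numbers (F_0 = 0, F_1 = 1, F_{j+2} = F_{j+1} + F_j; L_0 = 2, L_1 = 1, L_{j+2} = L_{j+1} + L_j), and for 0 < q < 1 let L(q) = ∑_{j=1}^{∞} q^j/(1−q^j) denote the Lambert series. Then ∑_{j=1}^{∞} L_{2j}/F_{4j} = √5 · ( L((3−√5)/2) − L((7−3√5)/2) ), where both sides are convergent series of real numbers. -/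
open Real goldenRatio

/-- The Lucas numbers: `L 0 = 2`, `L 1 = 1`, `L (n+2) = L (n+1) + L n`. -/
def lucas : ℕ → ℕ
  | 0 => 2
  | 1 => 1
  | n + 2 => lucas (n + 1) + lucas n

/-- The Lambert series `L(q) = ∑_{j ≥ 1} q^j / (1 - q^j)`. -/
noncomputable def lambert (q : ℝ) : ℝ := ∑' j : ℕ, q ^ (j + 1) / (1 - q ^ (j + 1))

lemma lucas_binet (n : ℕ) : (lucas n : ℝ) = φ ^ n + ψ ^ n := by
  induction n using Nat.twoStepInduction with
  | zero => norm_num [lucas, goldenRatio, goldenConj]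
  | one => norm_num [lucas, goldenRatio, goldenConj]
  | more n ih1 ih2 =>
    have h1 : φ ^ (n + 2) = φ ^ (n + 1) + φ ^ n := by
      have : φ ^ (n + 2) = φ ^ n * φ ^ 2 := by ring
      rw [this, goldenRatio_sq]; ring
    have h2 : ψ ^ (n + 2) = ψ ^ (n + 1) + ψ ^ n := by
      have : ψ ^ (n + 2) = ψ ^ n * ψ ^ 2 := by ring
      rw [this, goldenConj_sq]; ring
    rw [show lucas (n + 2) = lucas (n + 1) + lucas n from rfl]
    push_cast
    rw [ih2, ih1, h1, h2]; ring

lemma alg_identity (b s : ℝ) (hb0 : 0 < b) (hb1 : b < 1) (hs : 1 < s) :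
    (b⁻¹ + b) / ((b⁻¹ ^ 2 - b ^ 2) / s) = s * (b / (1 - b) - b ^ 2 / (1 - b ^ 2)) := by
  have hbne : b ≠ 0 := hb0.ne'
  have h1b : (1 : ℝ) - b ≠ 0 := by linarith
  have h1b2 : (1 : ℝ) - b ^ 2 ≠ 0 := by nlinarith
  have hden : b⁻¹ ^ 2 - b ^ 2 ≠ 0 := by
    have h2 : 1 < b⁻¹ := (one_lt_inv₀ hb0).mpr hb1
    have : b ^ 2 < 1 := by nlinarith
    nlinarith
  have hsne : s ≠ 0 := by linarith
  have hb4 : b ^ 4 < 1 := pow_lt_one₀ hb0.le hb1 (by norm_num)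
  rw [inv_pow] at *
  field_simp
  rw [div_eq_iff (sub_pos.mpr hb4).ne']
  ring

lemma summable_lambert_terms {q : ℝ} (h0 : 0 ≤ q) (h1 : q < 1) :
    Summable (fun j : ℕ => q ^ (j + 1) / (1 - q ^ (j + 1))) := by
  have hpos : ∀ j : ℕ, 0 < 1 - q ^ (j + 1) := fun j => by
    have : q ^ (j+1) < 1 := pow_lt_one₀ h0 h1 (by omega); linarith
  refine Summable.of_nonneg_of_le (fun j => ?_) (fun j => ?_)
    (((summable_geometric_of_lt_one h0 h1).mul_left q).mul_right (1 - q)⁻¹)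
  · exact div_nonneg (pow_nonneg h0 _) (hpos j).le
  · have hle : 1 - q ≤ 1 - q ^ (j + 1) := by
      have : q ^ (j + 1) ≤ q := pow_le_of_le_one h0 h1.le (Nat.succ_ne_zero j)
      linarith
    calc q ^ (j + 1) / (1 - q ^ (j + 1)) ≤ q ^ (j + 1) / (1 - q) := by
          exact div_le_div_of_nonneg_left (pow_nonneg h0 _) (by linarith) hle
      _ = q * q ^ j * (1 - q)⁻¹ := by rw [pow_succ, div_eq_mul_inv]; ring

theorem stmt_7 :
    Summable (fun j : ℕ => (lucas (2 * (j + 1)) : ℝ) / (Nat.fib (4 * (j + 1)) : ℝ)) ∧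
    Summable (fun j : ℕ =>
      ((3 - Real.sqrt 5) / 2) ^ (j + 1) / (1 - ((3 - Real.sqrt 5) / 2) ^ (j + 1))) ∧
    Summable (fun j : ℕ =>
      ((7 - 3 * Real.sqrt 5) / 2) ^ (j + 1) / (1 - ((7 - 3 * Real.sqrt 5) / 2) ^ (j + 1))) ∧
    (∑' j : ℕ, (lucas (2 * (j + 1)) : ℝ) / (Nat.fib (4 * (j + 1)) : ℝ)) =
      Real.sqrt 5 * (lambert ((3 - Real.sqrt 5) / 2) - lambert ((7 - 3 * Real.sqrt 5) / 2)) := by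
  have hs5 : Real.sqrt 5 ^ 2 = 5 := Real.sq_sqrt (by norm_num)
  have hs5lt : Real.sqrt 5 < 3 := by
    nlinarith [Real.sqrt_nonneg 5]
  have hs5gt : 1 < Real.sqrt 5 := by
    nlinarith [Real.sqrt_nonneg 5]
  set β : ℝ := (3 - Real.sqrt 5) / 2 with hβdef
  have hβ0 : 0 < β := by rw [hβdef]; linarith
  have hβ1 : β < 1 := by rw [hβdef]; linarith
  have hβψ : β = ψ ^ 2 := by
    rw [goldenConj_sq, hβdef, goldenConj]; ring
  have hβ2 : (7 - 3 * Real.sqrt 5) / 2 = β ^ 2 := by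
    rw [hβdef]; nlinarith [hs5]
  have hβ20 : 0 ≤ β ^ 2 := by positivity
  have hβ21 : β ^ 2 < 1 := by nlinarith
  -- per term identity
  have key : ∀ j : ℕ, (lucas (2 * (j + 1)) : ℝ) / (Nat.fib (4 * (j + 1)) : ℝ) =
      Real.sqrt 5 * (β ^ (j + 1) / (1 - β ^ (j + 1)) -
        (β ^ 2) ^ (j + 1) / (1 - (β ^ 2) ^ (j + 1))) := by
    intro j
    set n := j + 1
    set b : ℝ := β ^ n with hb
    have hb0 : 0 < b := pow_pos hβ0 n
    have hb1 : b < 1 := pow_lt_one₀ hβ0.le hβ1 (Nat.succ_ne_zero j)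
    have hφb : φ ^ (2 * n) = b⁻¹ := by
      have h1 : φ ^ 2 * β = 1 := by
        rw [hβψ, ← mul_pow, goldenRatio_mul_goldenConj]; norm_num
      have : φ ^ (2 * n) * b = 1 := by
        rw [hb, pow_mul, ← mul_pow, h1, one_pow]
      field_simp at this ⊢
      linarith
    have hψb : ψ ^ (2 * n) = b := by rw [hb, hβψ, ← pow_mul, mul_comm]
    have hluc : (lucas (2 * n) : ℝ) = b⁻¹ + b := by
      rw [lucas_binet, hφb, hψb]
    have hfib : (Nat.fib (4 * n) : ℝ) = (b⁻¹ ^ 2 - b ^ 2) / Real.sqrt 5 := by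
      rw [Real.coe_fib_eq]
      congr 1
      rw [show 4 * n = 2 * n * 2 from by ring, pow_mul φ (2*n) 2, pow_mul ψ (2*n) 2, hφb, hψb]
    have hβ2n : (β ^ 2) ^ n = b ^ 2 := by rw [hb, ← pow_mul, ← pow_mul, mul_comm]
    rw [hluc, hfib, hβ2n]
    exact alg_identity b (Real.sqrt 5) hb0 hb1 hs5gt
  have su : Summable (fun j : ℕ => β ^ (j + 1) / (1 - β ^ (j + 1))) :=
    summable_lambert_terms hβ0.le hβ1
  have sv : Summable (fun j : ℕ => (β ^ 2) ^ (j + 1) / (1 - (β ^ 2) ^ (j + 1))) :=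
    summable_lambert_terms hβ20 hβ21
  have sv' : Summable (fun j : ℕ =>
      ((7 - 3 * Real.sqrt 5) / 2) ^ (j + 1) / (1 - ((7 - 3 * Real.sqrt 5) / 2) ^ (j + 1))) := by
    rw [hβ2]; exact sv
  have smain : Summable (fun j : ℕ => (lucas (2 * (j + 1)) : ℝ) / (Nat.fib (4 * (j + 1)) : ℝ)) := by
    apply Summable.congr (((su.sub sv).mul_left (Real.sqrt 5)))
    intro j; exact (key j).symm
  refine ⟨smain, su, sv', ?_⟩
  calc (∑' j : ℕ, (lucas (2 * (j + 1)) : ℝ) / (Nat.fib (4 * (j + 1)) : ℝ))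
      = ∑' j : ℕ, Real.sqrt 5 * (β ^ (j + 1) / (1 - β ^ (j + 1)) -
        (β ^ 2) ^ (j + 1) / (1 - (β ^ 2) ^ (j + 1))) := tsum_congr key
    _ = Real.sqrt 5 * ((∑' j : ℕ, β ^ (j + 1) / (1 - β ^ (j + 1))) -
        ∑' j : ℕ, (β ^ 2) ^ (j + 1) / (1 - (β ^ 2) ^ (j + 1))) := by
        rw [tsum_mul_left, su.tsum_sub sv]
    _ = Real.sqrt 5 * (lambert β - lambert ((7 - 3 * Real.sqrt 5) / 2)) := by
        rw [lambert, lambert, hβ2]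
end

section
/- Let a, b, s ∈ ℂ with b ≠ 0, s ≠ 0 and s² = a² − 4b. Let f = 1 + aX + bX² ∈ ℂ⟦X⟧ and let Y_n denote the coefficient of X^n in f⁻¹. Then for every n ∈ ℕ, Y_n = (2^{n−1} b^n / s) · ( (a+s)/(−a+s)^n − (a−s)/(−a−s)^n ). (Note that b ≠ 0 forces −a+s ≠ 0 and −a−s ≠ 0, since (−a+s)(−a−s) = 4b.) -/
open PowerSeries

theorem stmt_8 (a b s : ℂ) (hb : b ≠ 0) (hs : s ≠ 0) (h : s ^ 2 = a ^ 2 - 4 * b) (n : ℕ) :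
    coeff n (invOfUnit (1 + C a * X + C b * X ^ 2) 1) =
      (2 : ℂ) ^ ((n : ℤ) - 1) * b ^ n / s *
        ((a + s) / (-a + s) ^ n - (a - s) / (-a - s) ^ n) := by
  set f : ℂ⟦X⟧ := 1 + C a * X + C b * X ^ 2 with hf
  set g : ℂ⟦X⟧ := invOfUnit f 1 with hg
  have hf0 : constantCoeff f = ((1 : ℂˣ) : ℂ) := by simp [hf]
  have hmul : f * g = 1 := mul_invOfUnit f 1 hf0
  set α : ℂ := (-a - s) / 2 with hα
  set β : ℂ := (-a + s) / 2 with hβ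
  have hαβ : α * β = b := by
    rw [hα, hβ]; field_simp; linear_combination -h
  have hα0 : α ≠ 0 := fun h0 => hb (by rw [← hαβ, h0, zero_mul])
  have hβ0 : β ≠ 0 := fun h0 => hb (by rw [← hαβ, h0, mul_zero])
  have hrootα : α ^ 2 + a * α + b = 0 := by
    rw [hα]; field_simp; linear_combination h
  have hrootβ : β ^ 2 + a * β + b = 0 := by
    rw [hβ]; field_simp; linear_combination h
  have hexp : f * g = g + C a * (X * g) + C b * (X * (X * g)) := by
    rw [hf]; ring
  have h0 : coeff 0 g = 1 := by
    rw [hg, coeff_zero_eq_constantCoeff, constantCoeff_invOfUnit]; simp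
  have h1 : coeff 1 g = -a := by
    have h1' : coeff 1 (g + C a * (X * g) + C b * (X * (X * g))) = coeff 1 1 := by
      rw [← hexp, hmul]
    simp only [map_add, coeff_C_mul, coeff_succ_X_mul, coeff_zero_eq_constantCoeff,
      map_mul, constantCoeff_X, zero_mul, mul_zero, add_zero, coeff_one] at h1'
    simp only [Nat.one_ne_zero, if_false] at h1'
    rw [← coeff_zero_eq_constantCoeff, h0] at h1'
    linear_combination h1'
  have hrec : ∀ m : ℕ, coeff (m + 2) g = -(a * coeff (m + 1) g + b * coeff m g) := by
    intro m
    have h2' : coeff (m + 2) (g + C a * (X * g) + C b * (X * (X * g))) =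
        coeff (m + 2) 1 := by rw [← hexp, hmul]
    have e1 : coeff (m + 2) (X * g) = coeff (m + 1) g := coeff_succ_X_mul _ _
    have e2 : coeff (m + 2) (X * (X * g)) = coeff m g := by
      rw [coeff_succ_X_mul, coeff_succ_X_mul]
    simp only [map_add, coeff_C_mul, e1, e2, coeff_one] at h2'
    simp only [Nat.succ_ne_zero, if_false] at h2'
    linear_combination h2'
  have key : ∀ m : ℕ, 2 * s * coeff m g = (a + s) * α ^ m - (a - s) * β ^ m := by
    intro m
    induction m using Nat.strong_induction_on with
    | _ m ih =>
      match m with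
      | 0 => rw [h0]; ring
      | 1 => rw [h1, hα, hβ]; ring
      | (k + 2) =>
        linear_combination 2 * s * hrec k - a * ih (k + 1) (by omega) - b * ih k (by omega)
          - (a + s) * α ^ k * hrootα + (a - s) * β ^ k * hrootβ
  have h2s : (2 : ℂ) * s ≠ 0 := mul_ne_zero two_ne_zero hs
  have hc : coeff n g = ((a + s) * α ^ n - (a - s) * β ^ n) / (2 * s) := by
    rw [eq_div_iff h2s]; linear_combination key n
  have h2 : (2 : ℂ) ^ ((n : ℤ) - 1) = 2 ^ n / 2 := by
    rw [zpow_sub₀ (by norm_num : (2:ℂ) ≠ 0), zpow_natCast, zpow_one]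
  have e1 : (-a + s) ^ n = 2 ^ n * β ^ n := by rw [show -a + s = 2 * β by rw [hβ]; ring, mul_pow]
  have e2 : (-a - s) ^ n = 2 ^ n * α ^ n := by rw [show -a - s = 2 * α by rw [hα]; ring, mul_pow]
  have e3 : b ^ n = α ^ n * β ^ n := by rw [← hαβ, mul_pow]
  rw [hc, h2, e1, e2, e3]
  have hu : α ^ n ≠ 0 := pow_ne_zero _ hα0
  have hv : β ^ n ≠ 0 := pow_ne_zero _ hβ0
  have hw : (2 : ℂ) ^ n ≠ 0 := pow_ne_zero _ two_ne_zero
  generalize α ^ n = u at hu ⊢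
  generalize β ^ n = v at hv ⊢
  generalize (2 : ℂ) ^ n = w at hw ⊢
  field_simp
end

section
/- Let a, b, s, q₀, q₁ ∈ ℂ with b ≠ 0, s ≠ 0 and s² = a² − 4b. Let f = 1 + aX + bX² ∈ ℂ⟦X⟧ and let S_n denote the coefficient of X^n in (q₀ + q₁X) · f⁻¹. Then for every n ∈ ℕ, S_n = (2^{n−1} b^n / s) · ( ((a+s)q₀ − 2q₁)/(−a+s)^n + ((−a+s)q₀ + 2q₁)/(−a−s)^n ). (Note that b ≠ 0 forces −a+s ≠ 0 and −a−s ≠ 0, since (−a+s)(−a−s) = 4b.) -/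
open PowerSeries

theorem stmt_9 (a b s q₀ q₁ : ℂ) (hb : b ≠ 0) (hs : s ≠ 0) (h : s ^ 2 = a ^ 2 - 4 * b) (n : ℕ) :
    coeff n ((C q₀ + C q₁ * X) * invOfUnit (1 + C a * X + C b * X ^ 2) 1) =
      (2 : ℂ) ^ ((n : ℤ) - 1) * b ^ n / s *
        (((a + s) * q₀ - 2 * q₁) / (-a + s) ^ n +
          ((-a + s) * q₀ + 2 * q₁) / (-a - s) ^ n) := by
  classical
  set f : ℂ⟦X⟧ := 1 + C a * X + C b * X ^ 2 with hf
  set T : ℂ⟦X⟧ := (C q₀ + C q₁ * X) * invOfUnit f 1 with hT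
  set α : ℂ := (-a + s) / 2 with hα
  set β : ℂ := (-a - s) / 2 with hβ
  set c₁ : ℂ := (a + s) * q₀ - 2 * q₁ with hc₁
  set c₂ : ℂ := (-a + s) * q₀ + 2 * q₁ with hc₂
  have hcf : constantCoeff f = ((1 : ℂˣ) : ℂ) := by simp [hf]
  have hfT : f * T = C q₀ + C q₁ * X := by
    rw [hT, ← mul_assoc, mul_comm f, mul_assoc, mul_invOfUnit f 1 hcf, mul_one]
  have hsplit : ∀ g : ℂ⟦X⟧, f * g = g + C a * (X * g) + C b * (X ^ 2 * g) := by
    intro g; rw [hf]; ring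
  -- initial coefficients
  have h0 : coeff 0 T = q₀ := by
    rw [coeff_zero_eq_constantCoeff]
    simp [hT, constantCoeff_invOfUnit]
  have h1 : coeff 1 T = q₁ - a * q₀ := by
    have hthis := congrArg (coeff 1) hfT
    rw [hsplit] at hthis
    have hx2 : coeff 1 (X ^ 2 * T) = 0 := by
      rw [coeff_X_pow_mul' T 2 1]; simp
    simp only [map_add, coeff_C_mul, coeff_succ_X_mul, hx2, mul_zero, h0,
      coeff_zero_eq_constantCoeff, map_add, constantCoeff_C, coeff_C, coeff_C_mul,
      coeff_one_X, mul_one, if_neg one_ne_zero] at hthis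
    linear_combination hthis
  -- recurrence
  have hrec : ∀ m : ℕ, coeff (m + 2) T = -a * coeff (m + 1) T - b * coeff m T := by
    intro m
    have hthis := congrArg (coeff (m + 2)) hfT
    rw [hsplit] at hthis
    have hx2 : coeff (m + 2) (X ^ 2 * T) = coeff m T := coeff_X_pow_mul T 2 m
    have hx1 : coeff (m + 2) (X * T) = coeff (m + 1) T := coeff_succ_X_mul (m + 1) T
    have hr : coeff (m + 2) (C q₀ + C q₁ * X) = 0 := by
      simp [coeff_C, coeff_X]
    simp only [map_add, coeff_C_mul, hx1, hx2, hr] at hthis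
    linear_combination hthis
  -- quadratic relations
  have hαq : α ^ 2 = -a * α - b := by rw [hα]; field_simp; linear_combination h
  have hβq : β ^ 2 = -a * β - b := by rw [hβ]; field_simp; linear_combination h
  -- closed form
  have key : ∀ m : ℕ, coeff m T = (c₂ * α ^ m + c₁ * β ^ m) / (2 * s) := by
    intro m
    induction m using Nat.twoStepInduction with
    | zero => rw [h0]; rw [hc₁, hc₂]; field_simp; ring
    | one => rw [h1]; rw [hα, hβ, hc₁, hc₂]; field_simp; ring
    | more m ih1 ih2 =>
      rw [hrec m, ih1, ih2]
      have e1 : α ^ (m + 2) = -a * α ^ (m + 1) - b * α ^ m := by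
        have e : α ^ (m + 2) = α ^ m * α ^ 2 := by ring
        rw [e, hαq]; ring
      have e2 : β ^ (m + 2) = -a * β ^ (m + 1) - b * β ^ m := by
        have e : β ^ (m + 2) = β ^ m * β ^ 2 := by ring
        rw [e, hβq]; ring
      rw [e1, e2]; field_simp; ring
  -- denominators nonzero
  have h4 : (-a + s) * (-a - s) = 4 * b := by linear_combination -h
  have hd1 : (-a + s) ≠ 0 := by
    intro hz
    rw [hz, zero_mul] at h4
    exact hb (by linear_combination -h4 / 4)
  have hd2 : (-a - s) ≠ 0 := by
    intro hz
    rw [hz, mul_zero] at h4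
    exact hb (by linear_combination -h4 / 4)
  rw [key n]
  -- now the algebraic conversion
  have hz2 : (2 : ℂ) ^ ((n : ℤ) - 1) = 2 ^ n / 2 := by
    rw [zpow_sub₀ (two_ne_zero), zpow_natCast, zpow_one]
  rw [hz2, hα, hβ, hc₁, hc₂]
  have hbn : b ^ n * (2 : ℂ) ^ (n * 2) = (-a + s) ^ n * (-a - s) ^ n := by
    have e : (2 : ℂ) ^ (n * 2) = 2 ^ n * 2 ^ n := by rw [pow_mul]; ring
    have e2 : b * (2 * 2) = (-a + s) * (-a - s) := by linear_combination h
    rw [e, ← mul_pow, ← mul_pow, e2, mul_pow]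
  rw [div_pow, div_pow]
  field_simp
  ring_nf
  linear_combination (-(((-a + s) * q₀ + 2 * q₁) * (-a + s) ^ n +
    ((a + s) * q₀ - 2 * q₁) * (-a - s) ^ n)) * hbn
end

section
/- Let y_n denote the coefficient of X^n in the power series (1 + X) · (1 − 2X − X²)⁻¹ ∈ ℝ⟦X⟧ (the power series 1 − 2X − X² is a unit since its constant coefficient is 1). Then for every n ∈ ℕ, y_n = ((−1)^n / (2√2)) · ( (−2+√2)/(1+√2)^n + (2+√2)/(1−√2)^n ). -/
open PowerSeries

noncomputable def myT : PowerSeries ℝ :=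
  (1 + X) * invOfUnit (1 - 2 * X - X ^ 2) 1

lemma myT_eq : (1 - 2 * X - X ^ 2 : PowerSeries ℝ) * myT = 1 + X := by
  have h : (1 - 2 * X - X ^ 2 : PowerSeries ℝ)
      * invOfUnit (1 - 2 * X - X ^ 2) 1 = 1 := by
    apply mul_invOfUnit
    simp
  rw [myT, mul_comm (1 + X : PowerSeries ℝ), ← mul_assoc, h, one_mul]

lemma coeff_X2_mul (n : ℕ) (f : PowerSeries ℝ) :
    coeff (R := ℝ) (n + 2) ((X : PowerSeries ℝ) ^ 2 * f) = coeff (R := ℝ) n f := by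
  have : (X : PowerSeries ℝ) ^ 2 * f = X * (X * f) := by ring
  rw [this, show n + 2 = (n + 1) + 1 from rfl, coeff_succ_X_mul, coeff_succ_X_mul]

lemma myT_zero : coeff (R := ℝ) 0 myT = 1 := by
  have h := congrArg (coeff (R := ℝ) 0) myT_eq
  simpa [mul_assoc] using h

lemma two_eq_C : (2 : PowerSeries ℝ) = C (R := ℝ) 2 :=
  (map_ofNat (C (R := ℝ)) 2).symm

lemma coeff_two_mul (k : ℕ) (f : PowerSeries ℝ) :
    coeff (R := ℝ) k (2 * f) = 2 * coeff (R := ℝ) k f := by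
  rw [two_eq_C, coeff_C_mul]

lemma myT_one : coeff (R := ℝ) 1 myT = 3 := by
  have h := congrArg (coeff (R := ℝ) 1) myT_eq
  have h2 : (X : PowerSeries ℝ) ^ 2 * myT = X * (X * myT) := by ring
  rw [sub_mul, sub_mul, mul_assoc, one_mul, h2] at h
  rw [map_sub, map_sub, map_add, coeff_one, coeff_X, coeff_two_mul] at h
  rw [coeff_succ_X_mul (n := 0), coeff_succ_X_mul (n := 0)] at h
  rw [coeff_zero_eq_constantCoeff, map_mul, constantCoeff_X, zero_mul] at h
  have h0 : coeff (R := ℝ) 0 myT = 1 := myT_zero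
  rw [coeff_zero_eq_constantCoeff] at h0
  rw [h0] at h
  norm_num at h
  linarith

lemma myT_rec (n : ℕ) :
    coeff (R := ℝ) (n + 2) myT = 2 * coeff (R := ℝ) (n + 1) myT + coeff (R := ℝ) n myT := by
  have h := congrArg (coeff (R := ℝ) (n + 2)) myT_eq
  rw [sub_mul, sub_mul, mul_assoc, one_mul] at h
  rw [map_sub, map_sub, map_add, coeff_one, coeff_X, coeff_two_mul] at h
  rw [show n + 2 = (n + 1) + 1 from rfl, coeff_succ_X_mul] at h
  rw [coeff_X2_mul] at h
  rw [if_neg (by omega : ¬ n + 1 + 1 = 0), if_neg (by omega : ¬ n + 1 + 1 = 1)] at h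
  rw [show (n+1)+1 = n+2 from rfl] at h
  linarith [h]

lemma sqrt2_sq : Real.sqrt 2 * Real.sqrt 2 = 2 :=
  Real.mul_self_sqrt (by norm_num)

lemma closed_form (n : ℕ) :
    coeff (R := ℝ) n myT =
      (2 + Real.sqrt 2) / (2 * Real.sqrt 2) * (1 + Real.sqrt 2) ^ n +
      (Real.sqrt 2 - 2) / (2 * Real.sqrt 2) * (1 - Real.sqrt 2) ^ n := by
  have hs := sqrt2_sq
  have hpos : (0:ℝ) < Real.sqrt 2 := Real.sqrt_pos.mpr (by norm_num)
  have hne : (2 * Real.sqrt 2 : ℝ) ≠ 0 := by positivity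
  induction n using Nat.twoStepInduction with
  | zero =>
    rw [coeff_zero_eq_constantCoeff] at *
    rw [show (constantCoeff (R := ℝ)) myT = 1 from by
      rw [← coeff_zero_eq_constantCoeff]; exact myT_zero]
    field_simp
    ring
  | one =>
    rw [myT_one]
    field_simp
    nlinarith [hs]
  | more m ih1 ih2 =>
    rw [myT_rec, ih1, ih2]
    have ha : (1 + Real.sqrt 2) ^ (m + 2) =
        (2 * (1 + Real.sqrt 2) + 1) * (1 + Real.sqrt 2) ^ m := by
      have h2 : (1 + Real.sqrt 2) ^ 2 = 2 * (1 + Real.sqrt 2) + 1 := by nlinarith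
      rw [pow_add, h2]; ring
    have hb : (1 - Real.sqrt 2) ^ (m + 2) =
        (2 * (1 - Real.sqrt 2) + 1) * (1 - Real.sqrt 2) ^ m := by
      have h2 : (1 - Real.sqrt 2) ^ 2 = 2 * (1 - Real.sqrt 2) + 1 := by nlinarith
      rw [pow_add, h2]; ring
    rw [ha, hb, pow_succ, pow_succ]
    ring

theorem stmt_11 (n : ℕ) :
    coeff (R := ℝ) n ((1 + X) * invOfUnit (1 - 2 * X - X ^ 2) 1) =
      (-1 : ℝ) ^ n / (2 * Real.sqrt 2) *
        ((-2 + Real.sqrt 2) / (1 + Real.sqrt 2) ^ n +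
          (2 + Real.sqrt 2) / (1 - Real.sqrt 2) ^ n) := by
  have hs := sqrt2_sq
  have hpos : (0:ℝ) < Real.sqrt 2 := Real.sqrt_pos.mpr (by norm_num)
  have h1 : Real.sqrt 2 ≠ 1 := by nlinarith
  have ha : (1 + Real.sqrt 2 : ℝ) ≠ 0 := by positivity
  have hb : (1 - Real.sqrt 2 : ℝ) ≠ 0 := by
    intro h; nlinarith
  have key1 : ((-1 : ℝ)) ^ n / (1 + Real.sqrt 2) ^ n = (1 - Real.sqrt 2) ^ n := by
    rw [div_eq_iff (pow_ne_zero _ ha), ← mul_pow]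
    congr 1; nlinarith
  have key2 : ((-1 : ℝ)) ^ n / (1 - Real.sqrt 2) ^ n = (1 + Real.sqrt 2) ^ n := by
    rw [div_eq_iff (pow_ne_zero _ hb), ← mul_pow]
    congr 1; nlinarith
  have := closed_form n
  rw [show ((1 + X) * invOfUnit (1 - 2 * X - X ^ 2) 1 : PowerSeries ℝ) = myT from rfl,
    this]
  have hne : (2 * Real.sqrt 2 : ℝ) ≠ 0 := by positivity
  rw [div_add_div _ _ (pow_ne_zero _ ha) (pow_ne_zero _ hb)]
  rw [div_mul_div_comm]
  rw [eq_div_iff (by positivity : (2 * Real.sqrt 2) * ((1 + Real.sqrt 2) ^ n * (1 - Real.sqrt 2) ^ n) ≠ 0)]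
  have hab : (1 + Real.sqrt 2) * (1 - Real.sqrt 2) = -1 := by nlinarith
  have habn : ((1 + Real.sqrt 2) * (1 - Real.sqrt 2)) ^ n = (-1 : ℝ) ^ n := by
    rw [hab]
  rw [← habn, mul_pow]
  field_simp
  ring
end

section
/- Let R be a commutative ring, m ≥ 1 and a₁,…,a_m ∈ R. Let f = 1 + ∑_{j=1}^m a_j X^j ∈ R⟦X⟧, let Y_n denote the coefficient of X^n in f⁻¹, and let Y_n^{(2)} denote the coefficient of X^n in (f⁻¹)². Then for every n ∈ ℕ, (n+1) · Y_{n+1} = − ∑_{j=1}^{min(m, n+1)} j · a_j · Y_{n+1−j}^{(2)}, where (n+1)·Y_{n+1} denotes the (n+1)-fold sum of Y_{n+1} in R. -/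
open PowerSeries Finset

theorem stmt_16 (R : Type*) [CommRing R] (m : ℕ) (hm : 1 ≤ m) (a : ℕ → R) (n : ℕ) :
    ((n + 1 : ℕ) : R) *
        coeff (n + 1) (invOfUnit (1 + ∑ j ∈ Finset.Icc 1 m, C (a j) * X ^ j) 1) =
      -∑ j ∈ Finset.Icc 1 (min m (n + 1)),
        (j : R) * a j *
          coeff (n + 1 - j)
            ((invOfUnit (1 + ∑ j ∈ Finset.Icc 1 m, C (a j) * X ^ j) 1) ^ 2) := by
  set f : R⟦X⟧ := 1 + ∑ j ∈ Finset.Icc 1 m, C (a j) * X ^ j with hf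
  set g : R⟦X⟧ := invOfUnit f 1 with hg
  have hcf : constantCoeff f = 1 := by
    rw [hf, map_add, map_one, map_sum]
    rw [Finset.sum_eq_zero, add_zero]
    intro j hj
    rw [Finset.mem_Icc] at hj
    rw [← coeff_zero_eq_constantCoeff]
    simp only [coeff_C_mul, coeff_X_pow]
    rw [if_neg (by omega), mul_zero]
  have hfg : f * g = 1 := mul_invOfUnit f 1 (by simp [hcf])
  have hd : f • derivativeFun g + g • derivativeFun f = 0 := by
    rw [← derivativeFun_mul, hfg, derivativeFun_one]
  have key : derivativeFun g = -(derivativeFun f * g ^ 2) := by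
    have h1 : f * derivativeFun g = -(g * derivativeFun f) := by
      rw [← smul_eq_mul, ← smul_eq_mul]; linear_combination hd
    calc derivativeFun g = (f * g) * derivativeFun g := by rw [hfg, one_mul]
      _ = g * (f * derivativeFun g) := by ring
      _ = -(derivativeFun f * g ^ 2) := by rw [h1]; ring
  have hcoef : ∀ i : ℕ, coeff (i + 1) f = if i + 1 ≤ m then a (i + 1) else 0 := by
    intro i
    rw [hf, map_add, map_sum]
    simp only [coeff_one, Nat.succ_ne_zero, if_false, coeff_C_mul, coeff_X_pow]
    rw [zero_add]
    simp_rw [mul_ite, mul_one, mul_zero]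
    rw [Finset.sum_ite_eq (Finset.Icc 1 m) (i+1) a]
    have : ((i + 1 ∈ Finset.Icc 1 m)) ↔ (i + 1 ≤ m) := by
      rw [Finset.mem_Icc]; omega
    simp [this]
  have hL : ((n + 1 : ℕ) : R) * coeff (n + 1) g = coeff n (derivativeFun g) := by
    rw [show derivativeFun g = derivative R g from rfl, coeff_derivativeFun]; push_cast; ring
  rw [hL, key, map_neg, neg_inj, coeff_mul,
    Finset.Nat.sum_antidiagonal_eq_sum_range_succ_mk]
  have hre : ∀ i ∈ Finset.range (n + 1),
      coeff i (derivativeFun f) * coeff (n - i) (g ^ 2)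
        = if i + 1 ≤ m then ((i+1 : ℕ) : R) * a (i+1) * coeff (n - i) (g ^ 2) else 0 := by
    intro i _
    rw [show derivativeFun f = derivative R f from rfl, coeff_derivativeFun, hcoef i]
    split <;> [push_cast; skip] <;> ring
  rw [Finset.sum_congr rfl hre, Finset.sum_ite, Finset.sum_const_zero, add_zero]
  apply Finset.sum_nbij' (fun i => i + 1) (fun j => j - 1)
  · intro i hi; simp only [Finset.mem_filter, Finset.mem_range] at hi
    simp only [Finset.mem_Icc, le_min_iff]; omega
  · intro j hj; simp only [Finset.mem_Icc, le_min_iff] at hj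
    simp only [Finset.mem_filter, Finset.mem_range]; omega
  · intro i hi; omega
  · intro j hj; simp only [Finset.mem_Icc, le_min_iff] at hj; omega
  · intro i hi
    simp only [Finset.mem_filter, Finset.mem_range] at hi
    have : n - i = n + 1 - (i + 1) := by omega
    rw [this]
end

section
/- Let x, w ∈ ℝ with 1 − xw ≠ 0 and 1 − (1+3x)w + 2x²w² ≠ 0, and set u = w/(1 − xw). Then 1 + (−1−x)u + (−x)u² ≠ 0, and (1/(1 − xw)) · (1 + x·u) / (1 + (−1−x)u + (−x)u²) = 1 / (1 − (1+3x)w + 2x²w²). -/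
theorem stmt_17 (x w u : ℝ) (h1 : 1 - x * w ≠ 0)
    (h2 : 1 - (1 + 3 * x) * w + 2 * x ^ 2 * w ^ 2 ≠ 0)
    (hu : u = w / (1 - x * w)) :
    1 + (-1 - x) * u + (-x) * u ^ 2 ≠ 0 ∧
    (1 / (1 - x * w)) * (1 + x * u) / (1 + (-1 - x) * u + (-x) * u ^ 2) =
      1 / (1 - (1 + 3 * x) * w + 2 * x ^ 2 * w ^ 2) := by
  have key : (1 - x * w) ^ 2 * (1 + (-1 - x) * u + (-x) * u ^ 2)
      = 1 - (1 + 3 * x) * w + 2 * x ^ 2 * w ^ 2 := by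
    subst hu
    field_simp
    ring
  have hne : 1 + (-1 - x) * u + (-x) * u ^ 2 ≠ 0 := by
    intro h
    apply h2
    rw [← key, h, mul_zero]
  have h3 : 1 + x * u = 1 / (1 - x * w) := by
    subst hu
    field_simp
    ring
  refine ⟨hne, ?_⟩
  rw [h3, div_eq_div_iff hne h2, ← key]
  field_simp
end

section
/- Let x be an element of a commutative ring R and let F_n(x) denote the coefficient of X^n in the power series X · (1 − xX − X²)⁻¹ ∈ R⟦X⟧ (the n-th Fibonacci polynomial evaluated at x; the series 1 − xX − X² is a unit since its constant coefficient is 1). Then F_0(x) = 0 and for every n ≥ 1, F_n(x) = ∑_{k=0}^{⌊(n−1)/2⌋} C(n−1−k, k) · x^{n−1−2k}. -/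
open PowerSeries Finset

private lemma choose_zero_of (m k : ℕ) (h : m < 2 * k) : (m - k).choose k = 0 :=
  Nat.choose_eq_zero_of_lt (by omega)

private lemma tsum_rec {R : Type*} [CommRing R] (x : R) (m : ℕ) :
    ∑ k ∈ Finset.range (m + 3), ((m + 2 - k).choose k : R) * x ^ (m + 2 - 2 * k) =
      x * ∑ k ∈ Finset.range (m + 2), ((m + 1 - k).choose k : R) * x ^ (m + 1 - 2 * k) +
      ∑ k ∈ Finset.range (m + 1), ((m - k).choose k : R) * x ^ (m - 2 * k) := by
  -- peel k = 0 from LHS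
  rw [Finset.sum_range_succ' (fun k => ((m + 2 - k).choose k : R) * x ^ (m + 2 - 2 * k)) (m + 2)]
  -- Pascal on shifted terms
  have pascal : ∀ k ∈ Finset.range (m + 2),
      ((m + 2 - (k + 1)).choose (k + 1) : R) * x ^ (m + 2 - 2 * (k + 1)) =
      ((m - k).choose (k + 1) : R) * x ^ (m - 2 * k) +
      ((m - k).choose k : R) * x ^ (m - 2 * k) := by
    intro k hk
    simp only [Finset.mem_range] at hk
    have he : m + 2 - 2 * (k + 1) = m - 2 * k := by omega
    rcases le_or_gt k m with h | h
    · have h1 : m + 2 - (k + 1) = (m - k) + 1 := by omega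
      rw [he, h1, Nat.choose_succ_succ, Nat.cast_add, add_mul]
      ring
    · have h1 : k = m + 1 := by omega
      subst h1
      simp [Nat.choose_eq_zero_of_lt]
  rw [Finset.sum_congr rfl pascal, Finset.sum_add_distrib]
  -- second of those sums: drop last (zero) term to get ∑ range (m+1)
  rw [Finset.sum_range_succ (fun k => ((m - k).choose k : R) * x ^ (m - 2 * k)) (m + 1)]
  have hz : ((m - (m + 1)).choose (m + 1) : R) * x ^ (m - 2 * (m + 1)) = 0 := by
    simp [choose_zero_of m (m + 1) (by omega)]
  -- first sum: also drop last (zero) term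
  rw [Finset.sum_range_succ (fun k => ((m - k).choose (k + 1) : R) * x ^ (m - 2 * k)) (m + 1)]
  have hz2 : ((m - (m + 1)).choose (m + 1 + 1) : R) * x ^ (m - 2 * (m + 1)) = 0 := by
    simp [Nat.choose_eq_zero_of_lt]
  -- RHS: x * t (m+1)
  have hr : x * ∑ k ∈ Finset.range (m + 2), ((m + 1 - k).choose k : R) * x ^ (m + 1 - 2 * k) =
      (∑ k ∈ Finset.range (m + 1), ((m - k).choose (k + 1) : R) * x ^ (m - 2 * k)) + x ^ (m + 2) := by
    rw [Finset.mul_sum,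
      Finset.sum_range_succ' (fun k => x * (((m + 1 - k).choose k : R) * x ^ (m + 1 - 2 * k))) (m + 1)]
    congr 1
    · apply Finset.sum_congr rfl
      intro k hk
      simp only [Finset.mem_range] at hk
      have h1 : m + 1 - (k + 1) = m - k := by omega
      rw [h1]
      rcases le_or_gt (2 * (k + 1)) (m + 1) with h | h
      · have h4 : m - 2 * k = (m + 1 - 2 * (k + 1)) + 1 := by omega
        rw [h4, pow_succ]
        ring
      · rw [Nat.choose_eq_zero_of_lt (show m - k < k + 1 by omega)]
        simp
    · simp
      ring
  rw [hz, hz2, hr]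
  norm_num
  ring

theorem stmt_19 (R : Type*) [CommRing R] (x : R) :
    coeff 0 (X * invOfUnit (1 - C x * X - X ^ 2) 1) = 0 ∧
    ∀ n : ℕ, 1 ≤ n →
      coeff n (X * invOfUnit (1 - C x * X - X ^ 2) 1) =
        ∑ k ∈ Finset.range ((n - 1) / 2 + 1),
          ((n - 1 - k).choose k : R) * x ^ (n - 1 - 2 * k) := by
  set S := invOfUnit (1 - C x * X - X ^ 2) (1 : Rˣ) with hS
  have hmul : (1 - C x * X - X ^ 2) * S = 1 := by
    apply mul_invOfUnit
    simp
  -- coefficient recurrence for S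
  have hc0 : coeff 0 S = 1 := by
    have := congrArg (coeff 0) hmul
    simpa [sub_mul, mul_assoc, coeff_zero_X_mul] using this
  have hc1 : coeff 1 S = x := by
    have := congrArg (coeff 1) hmul
    have h2 : coeff 1 (X ^ 2 * S) = 0 := by
      rw [coeff_X_pow_mul' S 2 1]
      simp
    have hX1 : coeff 1 (X * S) = coeff 0 S := coeff_succ_X_mul 0 S
    simp only [sub_mul, map_sub, mul_assoc, coeff_one, one_mul, coeff_C_mul, hX1, h2] at this
    simp at this
    rw [← coeff_zero_eq_constantCoeff_apply, hc0] at this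
    linear_combination this
  have hrec : ∀ n : ℕ, coeff (n + 2) S = x * coeff (n + 1) S + coeff n S := by
    intro n
    have := congrArg (coeff (n + 2)) hmul
    have h2 : coeff (n + 2) (X ^ 2 * S) = coeff n S := coeff_X_pow_mul S 2 n
    have hXn : coeff (n + 2) (X * S) = coeff (n + 1) S := coeff_succ_X_mul (n + 1) S
    simp only [sub_mul, map_sub, mul_assoc, coeff_one, one_mul, coeff_C_mul, hXn, h2] at this
    simp at this
    linear_combination this
  -- closed form: coeff m S = t m (full-range sum)
  have hclosed : ∀ m : ℕ, coeff m S =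
      ∑ k ∈ Finset.range (m + 1), ((m - k).choose k : R) * x ^ (m - 2 * k) := by
    intro m
    induction m using Nat.strong_induction_on with
    | _ m ih =>
      match m with
      | 0 => simpa using hc0
      | 1 =>
        rw [hc1]
        norm_num [Finset.sum_range_succ]
      | (m + 2) =>
        rw [hrec m, ih (m + 1) (by omega), ih m (by omega), tsum_rec x m]
  constructor
  · exact coeff_zero_X_mul S
  · intro n hn
    obtain ⟨m, rfl⟩ : ∃ m, n = m + 1 := ⟨n - 1, by omega⟩
    rw [coeff_succ_X_mul, hclosed m]
    have hsimp : m + 1 - 1 = m := by omega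
    rw [hsimp]
    symm
    apply Finset.sum_subset
    · intro k hk
      simp only [Finset.mem_range] at *
      omega
    · intro k hk hk2
      simp only [Finset.mem_range] at *
      rw [choose_zero_of m k (by omega)]
      simp
end
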